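/- Let θ_0 ∈ [0, π/2) and let {c_n}_{n∈ℤ} be a complex sequence such that c_n ∈ K(θ_0) and c_n + c_{−n} ∈ K(θ_0) for all n ≥ 1, where K(θ_0) = {z ∈ ℂ : |arg z| ≤ θ_0}. Suppose there exist λ ≥ 2 and a constant C > 0 such that ∑_{k=n}^{2n} |c_k − c_{k+1}| ≤ (C/n)·∑_{k=⌊n/λ⌋}^{⌊λn⌋} |c_k| for all n ≥ 1. If the symmetric partial sums S_n(f,x) = ∑_{k=−n}^{n} c_k e^{ikx} converge uniformly on ℝ to a continuous 2π-periodic function f, then lim_{n→∞} n·c_n = 0. -/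

import Mathlib

open Filter

/-- The `n`-th symmetric partial sum `∑_{k=-n}^{n} c_k e^{ikx}` of a trigonometric series. -/
noncomputable def symPartialSum (c : ℤ → ℂ) (n : ℕ) (x : ℝ) : ℂ :=
  ∑ k ∈ Finset.Icc (-(n : ℤ)) (n : ℤ), c k * Complex.exp ((k : ℂ) * x * Complex.I)

lemma symPartialSum_eq (c : ℤ → ℂ) (n : ℕ) (x : ℝ) :
    symPartialSum c n x = c 0 + ∑ k ∈ Finset.Ioc 0 n,
      (c k * Complex.exp ((k : ℂ) * x * Complex.I)
        + c (-(k : ℤ)) * Complex.exp (-(k : ℂ) * x * Complex.I)) := by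
  induction n with
  | zero => simp [symPartialSum]
  | succ n ih =>
    have h1 : Finset.Icc (-(↑(n+1) : ℤ)) (↑(n+1)) =
        insert (-(↑(n+1) : ℤ)) (insert ((↑(n+1) : ℤ)) (Finset.Icc (-(n:ℤ)) n)) := by
      ext k; simp; omega
    have h2 : Finset.Ioc 0 (n+1) = insert (n+1) (Finset.Ioc 0 n) := by
      ext k; simp; omega
    rw [symPartialSum, h1, Finset.sum_insert (by simp; omega),
      Finset.sum_insert (by simp), h2, Finset.sum_insert (by simp)]
    rw [← symPartialSum, ih]
    push_cast
    ring

lemma symPartialSum_diff (c : ℤ → ℂ) (a b : ℕ) (hab : a ≤ b) (x : ℝ) :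
    symPartialSum c b x - symPartialSum c a x = ∑ k ∈ Finset.Ioc a b,
      (c k * Complex.exp ((k : ℂ) * x * Complex.I)
        + c (-(k : ℤ)) * Complex.exp (-(k : ℂ) * x * Complex.I)) := by
  rw [symPartialSum_eq, symPartialSum_eq,
    ← Finset.sum_Ioc_consecutive _ (Nat.zero_le a) hab]
  ring

lemma sector_re {θ₀ : ℝ} (hθ₁ : θ₀ < Real.pi / 2) (z : ℂ)
    (h : |z.arg| ≤ θ₀) : ‖z‖ * Real.cos θ₀ ≤ z.re := by
  rcases eq_or_ne z 0 with rfl | hz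
  · simp
  · have habs : 0 < ‖z‖ := norm_pos_iff.mpr hz
    have hπ := Real.pi_pos
    have h1 : Real.cos θ₀ ≤ Real.cos |z.arg| :=
      Real.cos_le_cos_of_nonneg_of_le_pi (abs_nonneg _) (by linarith) h
    have h2 : Real.cos |z.arg| = z.re / ‖z‖ := by
      rw [Real.cos_abs, Complex.cos_arg hz]
    have := (le_div_iff₀ habs).mp (h2 ▸ h1)
    linarith [this]

lemma exp_sub_exp_neg (z : ℂ) :
    Complex.exp (z * Complex.I) - Complex.exp (-z * Complex.I)
      = 2 * Complex.I * Complex.sin z := by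
  rw [Complex.sin]; ring_nf; simp [Complex.I_sq]; ring

set_option maxHeartbeats 2000000 in
/-- Necessity part of the complex-space theorem: under the sector condition and
the mean value bounded variation condition on `|c_k|`, uniform convergence of
the symmetric partial sums to a continuous 2π-periodic function `f` implies
`n·cₙ → 0`. -/
theorem stmt11 (θ₀ : ℝ) (hθ₀ : 0 ≤ θ₀) (hθ₁ : θ₀ < Real.pi / 2)
    (c : ℤ → ℂ)
    (hsector : ∀ n : ℕ, 1 ≤ n →
      |Complex.arg (c n)| ≤ θ₀ ∧ |Complex.arg (c n + c (-(n : ℤ)))| ≤ θ₀)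
    (lam : ℝ) (hlam : 2 ≤ lam) (C : ℝ) (hC : 0 < C)
    (hMVBV : ∀ n : ℕ, 1 ≤ n →
      ∑ k ∈ Finset.Icc n (2 * n), ‖c k - c (k + 1)‖ ≤
        (C / n) * ∑ k ∈ Finset.Icc ⌊(n : ℝ) / lam⌋₊ ⌊lam * n⌋₊, ‖c k‖)
    (f : ℝ → ℂ) (hf : Continuous f) (hper : Function.Periodic f (2 * Real.pi))
    (hunif : TendstoUniformly (fun (n : ℕ) (x : ℝ) => symPartialSum c n x) f atTop) :
    Tendsto (fun n : ℕ => (n : ℂ) * c n) atTop (nhds 0) := by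
  have hπ := Real.pi_gt_three
  have hcθ : 0 < Real.cos θ₀ := Real.cos_pos_of_mem_Ioo ⟨by linarith, hθ₁⟩
  set cθ := Real.cos θ₀ with hcθdef
  have hlam0 : (0:ℝ) < lam := by linarith
  set δ : ℝ := 1/(2*lam^2) with hδdef
  have hδpos : 0 < δ := by positivity
  have hδ1 : δ ≤ 1 := by
    rw [hδdef, div_le_one (by positivity)]; nlinarith
  have hs₀ : 0 < Real.sin δ := Real.sin_pos_of_pos_of_lt_pi hδpos (by linarith)
  set s₀ := Real.sin δ with hs₀def
  rw [NormedAddCommGroup.tendsto_nhds_zero]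
  intro ε hε
  -- choose ε'
  set ε' : ℝ := ε*cθ*cθ*s₀/(2*(1+2*C)*(cθ+1)) with hε'def
  have hε' : 0 < ε' := by positivity
  obtain ⟨N₁, hN₁⟩ := eventually_atTop.mp (Metric.tendstoUniformly_iff.mp hunif ε' hε')
  obtain ⟨N, hN⟩ := exists_nat_ge (max (lam*((N₁:ℝ)+2)) (2*lam))
  rw [eventually_atTop]
  refine ⟨N, fun n hn => ?_⟩
  have hnR : max (lam*((N₁:ℝ)+2)) (2*lam) ≤ (n:ℝ) := le_trans hN (by exact_mod_cast hn)
  have hn2lam : 2*lam ≤ (n:ℝ) := le_trans (le_max_right _ _) hnR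
  have hnlamN : lam*((N₁:ℝ)+2) ≤ (n:ℝ) := le_trans (le_max_left _ _) hnR
  have hn1 : 1 ≤ n := by
    have h4 : (1:ℝ) ≤ (n:ℝ) := by linarith
    exact_mod_cast Nat.one_le_cast.mp h4
  set a := ⌊(n:ℝ)/lam⌋₊ with hadef
  set b := ⌊lam*(n:ℝ)⌋₊ with hbdef
  have ha2 : 2 ≤ a := Nat.le_floor (by rw [le_div_iff₀ hlam0]; push_cast; linarith)
  have haN₁ : N₁ + 2 ≤ a := Nat.le_floor (by rw [le_div_iff₀ hlam0]; push_cast; linarith)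
  have han : a ≤ n := by
    have hfl : (n:ℝ)/lam ≤ ((n:ℕ):ℝ) := by
      rw [div_le_iff₀ hlam0]
      nlinarith [(Nat.cast_nonneg n : (0:ℝ) ≤ (n:ℝ)), mul_nonneg (Nat.cast_nonneg n : (0:ℝ) ≤ (n:ℝ)) (by linarith : (0:ℝ) ≤ lam - 1)]
    calc a ≤ ⌊((n:ℕ):ℝ)⌋₊ := Nat.floor_le_floor hfl
    _ = n := Nat.floor_natCast n
  have hb2n : 2*n ≤ b := Nat.le_floor (by push_cast; nlinarith [mul_nonneg (Nat.cast_nonneg n) (by linarith : (0:ℝ) ≤ lam - 2)])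
  have hab : a ≤ b := le_trans han (le_trans (Nat.le_mul_of_pos_left n (by norm_num)) hb2n)
  have hbpos : 0 < b := lt_of_lt_of_le (by omega) hab
  have hbR : (0:ℝ) < b := by exact_mod_cast hbpos
  have hbl : (b:ℝ) ≤ lam * n := Nat.floor_le (by positivity)
  have halow : (n:ℝ)/(2*lam) ≤ a := by
    have h1 : (n:ℝ)/lam - 1 < a := Nat.sub_one_lt_floor _
    have h2 : (n:ℝ)/(2*lam) ≤ (n:ℝ)/lam - 1 := by
      rw [div_sub' (ne_of_gt hlam0), div_le_div_iff₀ (by positivity) hlam0]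
      nlinarith
    linarith
  have hδb : δ*(b:ℝ) ≤ a := by
    have : δ * (b:ℝ) ≤ δ * (lam * n) := by nlinarith
    have h2 : δ * (lam * n) = (n:ℝ)/(2*lam) := by
      rw [hδdef]; field_simp
    linarith
  set a' := a - 1 with ha'def
  have ha'1 : a' + 1 = a := by omega
  have ha'N₁ : N₁ ≤ a' := by omega
  have ha'b : a' ≤ b := by omega
  set h : ℝ := 1/(b:ℝ) with hhdef
  have hh0 : 0 < h := by positivity
  set T := Finset.Ioc a' b with hTdef
  -- membership facts
  have hmem : ∀ k ∈ T, 1 ≤ k ∧ a ≤ k ∧ k ≤ b := by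
    intro k hk
    rw [hTdef, Finset.mem_Ioc] at hk
    omega
  -- sine bounds
  have hsin : ∀ k ∈ T, s₀ ≤ Real.sin ((k:ℝ)*h) ∧ Real.sin ((k:ℝ)*h) ≤ 1 := by
    intro k hk
    obtain ⟨hk1, hka, hkb⟩ := hmem k hk
    have hkaR : (a:ℝ) ≤ k := by exact_mod_cast hka
    have hkbR : (k:ℝ) ≤ b := by exact_mod_cast hkb
    have hkh1 : (k:ℝ)*h ≤ 1 := by
      rw [hhdef]; rw [mul_one_div, div_le_one hbR]; exact hkbR
    have hkhδ : δ ≤ (k:ℝ)*h := by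
      rw [hhdef, mul_one_div, le_div_iff₀ hbR]; linarith
    constructor
    · have m1 : δ ∈ Set.Icc (-(Real.pi/2)) (Real.pi/2) :=
        Set.mem_Icc.mpr ⟨by linarith, by linarith⟩
      have m2 : (k:ℝ)*h ∈ Set.Icc (-(Real.pi/2)) (Real.pi/2) :=
        Set.mem_Icc.mpr ⟨by linarith [mul_nonneg (Nat.cast_nonneg k : (0:ℝ) ≤ k) hh0.le],
          by linarith⟩
      exact Real.strictMonoOn_sin.monotoneOn m1 m2 hkhδ
    · exact Real.sin_le_one _
  -- sector bounds
  have hsec1 : ∀ k ∈ T, ‖c k‖ * cθ ≤ (c k).re := by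
    intro k hk
    exact sector_re hθ₁ _ (hsector k (hmem k hk).1).1
  have hsec2 : ∀ k ∈ T, ‖c k + c (-(k:ℤ))‖ * cθ ≤ (c k + c (-(k:ℤ))).re := by
    intro k hk
    exact sector_re hθ₁ _ (hsector k (hmem k hk).1).2
  -- uniform bound on partial sum differences
  have hD : ∀ x : ℝ, ‖symPartialSum c b x - symPartialSum c a' x‖ ≤ 2*ε' := by
    intro x
    have h1 := hN₁ b (le_trans ha'N₁ ha'b) x
    have h2 := hN₁ a' ha'N₁ x
    have : ‖symPartialSum c b x - symPartialSum c a' x‖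
        = dist (symPartialSum c b x) (symPartialSum c a' x) := by
      rw [Complex.dist_eq]
    rw [this]
    calc dist (symPartialSum c b x) (symPartialSum c a' x)
        ≤ dist (symPartialSum c b x) (f x) + dist (f x) (symPartialSum c a' x) :=
          dist_triangle _ _ _
      _ ≤ 2*ε' := by rw [dist_comm (symPartialSum c b x)]; linarith
  have hdiff := fun x => symPartialSum_diff c a' b ha'b x
  -- D0
  have hD0 : symPartialSum c b 0 - symPartialSum c a' 0 = ∑ k ∈ T, (c k + c (-(k:ℤ))) := by
    rw [hdiff 0]
    refine Finset.sum_congr rfl fun k _ => ?_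
    push_cast
    simp [Complex.exp_zero]
  -- A bound
  have hA : cθ * ∑ k ∈ T, ‖c k + c (-(k:ℤ))‖ ≤ 2*ε' := by
    rw [Finset.mul_sum]
    calc ∑ k ∈ T, cθ * ‖c k + c (-(k:ℤ))‖
        ≤ ∑ k ∈ T, (c k + c (-(k:ℤ))).re := by
          refine Finset.sum_le_sum fun k hk => ?_
          have := hsec2 k hk; linarith
      _ = (∑ k ∈ T, (c k + c (-(k:ℤ)))).re := by rw [Complex.re_sum]
      _ ≤ ‖∑ k ∈ T, (c k + c (-(k:ℤ)))‖ := Complex.re_le_norm _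
      _ = ‖symPartialSum c b 0 - symPartialSum c a' 0‖ := by rw [hD0]
      _ ≤ 2*ε' := hD 0
  -- Q identity
  have hQid : (symPartialSum c b h - symPartialSum c a' h)
      - (symPartialSum c b (-h) - symPartialSum c a' (-h))
      = 2*Complex.I * ∑ k ∈ T, (c k - c (-(k:ℤ))) * ((Real.sin ((k:ℝ)*h) : ℝ) : ℂ) := by
    rw [hdiff h, hdiff (-h), ← Finset.sum_sub_distrib, Finset.mul_sum]
    refine Finset.sum_congr rfl fun k _ => ?_
    have e1 : (k:ℂ) * (h:ℝ) * Complex.I = (((k:ℝ)*h : ℝ):ℂ) * Complex.I := by push_cast; ring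
    have e2 : -(k:ℂ) * ((-h:ℝ):ℂ) * Complex.I = (((k:ℝ)*h : ℝ):ℂ) * Complex.I := by push_cast; ring
    have e3 : (k:ℂ) * ((-h:ℝ):ℂ) * Complex.I = -(((k:ℝ)*h : ℝ):ℂ) * Complex.I := by push_cast; ring
    have e4 : -(k:ℂ) * ((h:ℝ):ℂ) * Complex.I = -(((k:ℝ)*h : ℝ):ℂ) * Complex.I := by push_cast; ring
    rw [e1, e2, e3, e4]
    have := exp_sub_exp_neg ((((k:ℝ)*h : ℝ):ℂ))
    rw [← Complex.ofReal_sin] at this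
    set E1 := Complex.exp ((((k:ℝ)*h : ℝ):ℂ) * Complex.I)
    set E2 := Complex.exp (-(((k:ℝ)*h : ℝ):ℂ) * Complex.I)
    linear_combination (c k - c (-(k:ℤ))) * this
  -- Q bound
  have hQ : ‖∑ k ∈ T, (c k - c (-(k:ℤ))) * ((Real.sin ((k:ℝ)*h) : ℝ) : ℂ)‖ ≤ 2*ε' := by
    have h1 : ‖2*Complex.I * ∑ k ∈ T, (c k - c (-(k:ℤ))) * ((Real.sin ((k:ℝ)*h) : ℝ) : ℂ)‖ ≤ 4*ε' := by
      rw [← hQid]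
      calc ‖_‖ ≤ ‖symPartialSum c b h - symPartialSum c a' h‖
            + ‖symPartialSum c b (-h) - symPartialSum c a' (-h)‖ := by
              simpa using norm_sub_le
                (symPartialSum c b h - symPartialSum c a' h)
                (symPartialSum c b (-h) - symPartialSum c a' (-h))
        _ ≤ 4*ε' := by linarith [hD h, hD (-h)]
    rw [norm_mul, norm_mul, Complex.norm_two, Complex.norm_I, mul_one] at h1
    linarith
  -- bound on the symmetric-part sine sum
  have hPsin : ‖∑ k ∈ T, (c k + c (-(k:ℤ))) * ((Real.sin ((k:ℝ)*h) : ℝ) : ℂ)‖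
      ≤ 2*ε'/cθ := by
    have h1 : ‖∑ k ∈ T, (c k + c (-(k:ℤ))) * ((Real.sin ((k:ℝ)*h) : ℝ) : ℂ)‖
        ≤ ∑ k ∈ T, ‖c k + c (-(k:ℤ))‖ := by
      refine le_trans (norm_sum_le _ _) (Finset.sum_le_sum fun k hk => ?_)
      rw [norm_mul, Complex.norm_real, Real.norm_eq_abs]
      have hs := hsin k hk
      have h2 : |Real.sin ((k:ℝ)*h)| ≤ 1 := abs_le.mpr ⟨by linarith [hs.1, hs₀], hs.2⟩
      nlinarith [norm_nonneg (c k + c (-(k:ℤ))), abs_nonneg (Real.sin ((k:ℝ)*h))]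
    have h3 : ∑ k ∈ T, ‖c k + c (-(k:ℤ))‖ ≤ 2*ε'/cθ := by
      rw [le_div_iff₀ hcθ]; linarith [hA]
    linarith
  -- R identity and bound
  have hRid : (2:ℂ) * ∑ k ∈ T, c k * ((Real.sin ((k:ℝ)*h) : ℝ) : ℂ)
      = (∑ k ∈ T, (c k - c (-(k:ℤ))) * ((Real.sin ((k:ℝ)*h) : ℝ) : ℂ))
        + ∑ k ∈ T, (c k + c (-(k:ℤ))) * ((Real.sin ((k:ℝ)*h) : ℝ) : ℂ) := by
    rw [← Finset.sum_add_distrib, Finset.mul_sum]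
    exact Finset.sum_congr rfl fun k _ => by ring
  have hR : 2 * ‖∑ k ∈ T, c k * ((Real.sin ((k:ℝ)*h) : ℝ) : ℂ)‖
      ≤ 2*ε' + 2*ε'/cθ := by
    have h1 : ‖(2:ℂ) * ∑ k ∈ T, c k * ((Real.sin ((k:ℝ)*h) : ℝ) : ℂ)‖
        ≤ 2*ε' + 2*ε'/cθ := by
      rw [hRid]
      refine le_trans (norm_add_le _ _) ?_
      linarith [hQ, hPsin]
    rw [norm_mul, Complex.norm_two] at h1
    linarith
  -- lower bound: sector + sine lower bound
  have hSR : cθ * s₀ * (∑ k ∈ T, ‖c k‖) ≤ ε' + ε'/cθ := by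
    have hlow : cθ * s₀ * (∑ k ∈ T, ‖c k‖)
        ≤ (∑ k ∈ T, c k * ((Real.sin ((k:ℝ)*h) : ℝ) : ℂ)).re := by
      rw [Complex.re_sum, Finset.mul_sum]
      refine Finset.sum_le_sum fun k hk => ?_
      have hre := hsec1 k hk
      have hs := hsin k hk
      have habsnn : 0 ≤ ‖c k‖ := norm_nonneg _
      have hrenn : 0 ≤ (c (k:ℤ)).re := by nlinarith
      have hmulre : (c (k:ℤ) * ((Real.sin ((k:ℝ)*h) : ℝ) : ℂ)).re
          = (c (k:ℤ)).re * Real.sin ((k:ℝ)*h) := by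
        rw [Complex.mul_re, Complex.ofReal_re, Complex.ofReal_im, mul_zero, sub_zero]
      rw [hmulre]
      nlinarith [hs.1, hs.2]
    have h2 := Complex.re_le_norm (∑ k ∈ T, c k * ((Real.sin ((k:ℝ)*h) : ℝ) : ℂ))
    have h3 : 2 * (ε' + ε'/cθ) = 2 * ε' + 2 * ε' / cθ := by ring
    linarith
  -- the block sum
  have hTIcc : T = Finset.Icc a b := by
    rw [hTdef]; ext k; simp only [Finset.mem_Ioc, Finset.mem_Icc]; omega
  set Sig := ∑ k ∈ Finset.Icc a b, ‖c (k:ℤ)‖ with hSigdef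
  have hSignn : 0 ≤ Sig := Finset.sum_nonneg fun _ _ => norm_nonneg _
  have hS2 : cθ * s₀ * Sig ≤ ε' + ε'/cθ := by
    rw [hSigdef, ← hTIcc]; exact hSR
  -- MVBV step: telescoping
  set D := ∑ k ∈ Finset.Icc n (2*n), ‖c (k:ℤ) - c ((k:ℤ) + 1)‖ with hDdef
  have hDnn : 0 ≤ D := Finset.sum_nonneg fun _ _ => norm_nonneg _
  have htel : ∀ m, n ≤ m → m ≤ 2*n →
      ‖c (n:ℤ)‖ ≤ ‖c (m:ℤ)‖ + D := by
    intro m hm hm2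
    have key : ∀ m, n ≤ m → ‖c (n:ℤ)‖ ≤ ‖c (m:ℤ)‖
        + ∑ k ∈ Finset.Ico n m, ‖c (k:ℤ) - c ((k:ℤ) + 1)‖ := by
      intro m hm
      induction m, hm using Nat.le_induction with
      | base => simp
      | succ m hm ih =>
        rw [Finset.sum_Ico_succ_top hm]
        have h3 : ‖c (m:ℤ)‖ ≤ ‖c ((m:ℤ)+1)‖
            + ‖c (m:ℤ) - c ((m:ℤ)+1)‖ := by
          have h4 := norm_add_le (c ((m:ℤ)+1)) (c (m:ℤ) - c ((m:ℤ)+1))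
          simpa using h4
        have hcast : ((m+1 : ℕ) : ℤ) = (m:ℤ) + 1 := by push_cast; ring
        rw [hcast]
        linarith
    have hsub : ∑ k ∈ Finset.Ico n m, ‖c (k:ℤ) - c ((k:ℤ) + 1)‖ ≤ D := by
      rw [hDdef]
      refine Finset.sum_le_sum_of_subset_of_nonneg ?_ fun _ _ _ => norm_nonneg _
      intro k hk
      simp only [Finset.mem_Ico, Finset.mem_Icc] at hk ⊢
      omega
    linarith [key m hm]
  -- sum the telescoping bound over m ∈ [n, 2n]
  have hcard : (Finset.Icc n (2*n)).card = n+1 := by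
    rw [Nat.card_Icc]; omega
  have hstep : ((n:ℝ)+1) * ‖c (n:ℤ)‖
      ≤ (∑ m ∈ Finset.Icc n (2*n), ‖c (m:ℤ)‖) + ((n:ℝ)+1) * D := by
    have h1 := Finset.sum_le_sum (f := fun _ : ℕ => ‖c (n:ℤ)‖)
      (g := fun m : ℕ => ‖c (m:ℤ)‖ + D)
      (s := Finset.Icc n (2*n))
      (fun m hm => by
        rw [Finset.mem_Icc] at hm
        exact htel m hm.1 hm.2)
    rw [Finset.sum_const, hcard, Finset.sum_add_distrib, Finset.sum_const, hcard,
      nsmul_eq_mul, nsmul_eq_mul] at h1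
    push_cast at h1
    linarith
  have hsub2 : ∑ m ∈ Finset.Icc n (2*n), ‖c (m:ℤ)‖ ≤ Sig := by
    rw [hSigdef]
    refine Finset.sum_le_sum_of_subset_of_nonneg ?_ fun _ _ _ => norm_nonneg _
    intro k hk
    simp only [Finset.mem_Icc] at hk ⊢
    omega
  have hnpos : (0:ℝ) < n := by exact_mod_cast hn1
  have hn1R : (1:ℝ) ≤ n := by exact_mod_cast hn1
  have hMV := hMVBV n hn1
  rw [← hadef, ← hbdef, ← hDdef, ← hSigdef] at hMV
  have hMV' : (n:ℝ) * D ≤ C * Sig := by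
    have h1 : (n:ℝ) * D ≤ (n:ℝ) * (C/(n:ℝ) * Sig) :=
      mul_le_mul_of_nonneg_left hMV (le_of_lt hnpos)
    have h2 : (n:ℝ) * (C/(n:ℝ) * Sig) = C * Sig := by
      field_simp
    linarith
  have habsnn : 0 ≤ ‖c (n:ℤ)‖ := norm_nonneg _
  have hfin1 : (n:ℝ) * ‖c (n:ℤ)‖ ≤ (1+2*C) * Sig := by
    nlinarith [hstep, hsub2, hMV', hDnn, hSignn, hnpos, habsnn, hn1R]
  -- final arithmetic
  have hnorm : ‖((n:ℕ):ℂ) * c (n:ℤ)‖ = (n:ℝ) * ‖c (n:ℤ)‖ := by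
    simp
  have hne1 : cθ ≠ 0 := ne_of_gt hcθ
  have hne2 : (1+2*C) ≠ 0 := by positivity
  have hne3 : cθ + 1 ≠ 0 := by positivity
  have hkey : ε' + ε'/cθ = cθ*s₀*(ε/(2*(1+2*C))) := by
    rw [hε'def]; field_simp
  have hSig2 : Sig ≤ ε/(2*(1+2*C)) := by
    rw [hkey] at hS2
    exact le_of_mul_le_mul_left hS2 (by positivity)
  have hfin2 : (1+2*C) * (ε/(2*(1+2*C))) = ε/2 := by
    field_simp
  have hfin3 : (1+2*C) * Sig ≤ ε/2 := by
    calc (1+2*C) * Sig ≤ (1+2*C) * (ε/(2*(1+2*C))) := by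
          apply mul_le_mul_of_nonneg_left hSig2 (by positivity)
      _ = ε/2 := hfin2
  rw [hnorm]
  linarith
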